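/- If O is a finite order ideal of monomials in n variables and b is an element of minimal degree in the border ∂O, then O ∪ {b} is again an order ideal. -/

import Mathlib

open MvPolynomial

variable {k : Type*} [Field k] {n : ℕ}

def isOrderIdeal (O : Finset (Fin n →₀ ℕ)) : Prop :=
  ∀ t ∈ O, ∀ t' : Fin n →₀ ℕ, t' ≤ t → t' ∈ O

noncomputable def borderF (S : Finset (Fin n →₀ ℕ)) : Finset (Fin n →₀ ℕ) := by
  classical
  exact (S.biUnion fun s => (Finset.univ : Finset (Fin n)).image fun i => s + Finsupp.single i 1) \ S

noncomputable def deg (t : Fin n →₀ ℕ) : ℕ := t.sum fun _ e => e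

lemma deg_eq (t : Fin n →₀ ℕ) : deg t = ∑ i, t i := by
  simp [deg, Finsupp.sum_fintype]

lemma deg_mono {t t' : Fin n →₀ ℕ} (h : t ≤ t') : deg t ≤ deg t' := by
  rw [deg_eq, deg_eq]
  exact Finset.sum_le_sum fun i _ => h i

lemma deg_strict_mono {t t' : Fin n →₀ ℕ} (h : t ≤ t') (hne : t ≠ t') :
    deg t < deg t' := by
  rw [deg_eq, deg_eq]
  obtain ⟨i, hi⟩ : ∃ i, t i ≠ t' i := by
    by_contra hc
    push_neg at hc
    exact hne (Finsupp.ext hc)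
  exact Finset.sum_lt_sum (fun j _ => h j) ⟨i, Finset.mem_univ i, lt_of_le_of_ne (h i) hi⟩

lemma exists_border_le (O : Finset (Fin n →₀ ℕ))
    (h0 : (0 : Fin n →₀ ℕ) ∈ O) :
    ∀ t : Fin n →₀ ℕ, t ∉ O → ∃ u ∈ borderF O, u ≤ t := by
  suffices H : ∀ d : ℕ, ∀ t : Fin n →₀ ℕ, deg t ≤ d → t ∉ O → ∃ u ∈ borderF O, u ≤ t by
    exact fun t => H (deg t) t le_rfl
  intro d
  induction d with
  | zero =>
    intro t hd ht
    exfalso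
    apply ht
    have : t = 0 := by
      ext j
      have := (deg_mono (show Finsupp.single j (t j) ≤ t by
        intro l; simp only [Finsupp.single_apply]; by_cases h : j = l <;> simp [h])).trans hd
      simp [deg_eq, Finsupp.single_apply] at this
      simpa using this
    exact this ▸ h0
  | succ d ih =>
    intro t hd ht
    have htne : t ≠ 0 := fun h => ht (h ▸ h0)
    obtain ⟨i, hi⟩ : ∃ i, 0 < t i := by
      by_contra hc
      push_neg at hc
      exact htne (Finsupp.ext fun j => Nat.le_zero.mp (hc j))
    set t₀ := t - Finsupp.single i 1 with ht₀
    have hle : Finsupp.single i 1 ≤ t := by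
      intro j
      simp only [Finsupp.single_apply]
      by_cases hj : i = j
      · subst hj; simpa using Nat.one_le_iff_ne_zero.mpr hi.ne'
      · simp [hj]
    have hsum : t₀ + Finsupp.single i 1 = t := tsub_add_cancel_of_le hle
    by_cases hO0 : t₀ ∈ O
    · refine ⟨t, ?_, le_refl _⟩
      simp only [borderF, Finset.mem_sdiff, Finset.mem_biUnion, Finset.mem_image]
      exact ⟨⟨t₀, hO0, ⟨i, Finset.mem_univ i, hsum⟩⟩, ht⟩
    · have ht₀le : t₀ ≤ t := tsub_le_self
      have hlt : deg t₀ < deg t := by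
        refine deg_strict_mono ht₀le fun h => ?_
        have := congrArg (fun f : Fin n →₀ ℕ => f i) hsum
        simp [h] at this
      obtain ⟨u, hu, hule⟩ := ih t₀ (Nat.lt_succ_iff.mp (hlt.trans_le hd)) hO0
      exact ⟨u, hu, hule.trans ht₀le⟩

theorem border_min_degree_insert (O : Finset (Fin n →₀ ℕ)) (hO : isOrderIdeal O)
    (b : Fin n →₀ ℕ) (hb : b ∈ borderF O)
    (hmin : ∀ b' ∈ borderF O, deg b ≤ deg b') :
    isOrderIdeal (by classical exact insert b O) := by
  classical
  have hOne : ∃ s, s ∈ O := by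
    simp only [borderF, Finset.mem_sdiff, Finset.mem_biUnion, Finset.mem_image] at hb
    obtain ⟨⟨s, hs, _⟩, _⟩ := hb
    exact ⟨s, hs⟩
  obtain ⟨s, hs⟩ := hOne
  have h0 : (0 : Fin n →₀ ℕ) ∈ O := hO s hs 0 (by intro j; simp)
  intro t ht t' ht'
  rcases Finset.mem_insert.mp ht with rfl | htO
  · by_cases heq : t' = t
    · exact heq ▸ Finset.mem_insert_self _ _
    · refine Finset.mem_insert_of_mem ?_
      by_contra ht'O
      obtain ⟨u, hu, hule⟩ := exists_border_le O h0 t' ht'O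
      have : deg t ≤ deg u := hmin u hu
      have : deg u ≤ deg t' := deg_mono hule
      have : deg t' < deg t := deg_strict_mono ht' heq
      omega
  · exact Finset.mem_insert_of_mem (hO t htO t' ht')
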